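/- For any rank-r matroid M on an n-element linearly ordered set, the image of λ_M : S_n → W(n,r) is an order ideal in W(n,r): if w lies in the image of λ_M and v ≤ w in W(n,r), then v lies in the image of λ_M. -/

import Mathlib

open Matroid Set

/-- The rank of a set `X` in a matroid `M`: the largest cardinality of an independent
subset of `X`. -/
noncomputable def matRk {α : Type*} (M : Matroid α) (X : Set α) : ℕ :=
  sSup {k : ℕ | ∃ I : Set α, I ⊆ X ∧ M.Indep I ∧ I.ncard = k}

/-- The set of positions of the ones of a 0-1 word of length `n`. -/
def ones {n : ℕ} (v : Fin n → Bool) : Finset (Fin n) :=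
  Finset.univ.filter (fun i => v i = true)

/-- The order on `W(n,r)`: `v ≤ w` iff `π_k(v) ≤ π_k(w)` for all `k`, where `π_k`
is the position of the `k`-th one. -/
def wordLE {n : ℕ} (v w : Fin n → Bool) : Prop :=
  (ones v).card = (ones w).card ∧
  ∀ (k : ℕ) (hv : k < (ones v).card) (hw : k < (ones w).card),
    (ones v).orderEmbOfFin rfl ⟨k, hv⟩ ≤ (ones w).orderEmbOfFin rfl ⟨k, hw⟩

/-- `λ_M(σ) = w_{M(S_σ)}`: the word of a matroid `M` on `Fin n` relative to the
reordering `σ(e_1) < ⋯ < σ(e_n)` of the ground set. -/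
noncomputable def lam {n : ℕ} (M : Matroid (Fin n)) (σ : Equiv.Perm (Fin n)) :
    Fin n → Bool :=
  fun i => decide
    (matRk M (⇑σ '' {j : Fin n | j < i}) < matRk M (⇑σ '' {j : Fin n | j ≤ i}))

section Aux
variable {n : ℕ} {M : Matroid (Fin n)}

lemma matRk_set_nonempty (M : Matroid (Fin n)) (X : Set (Fin n)) :
    {k : ℕ | ∃ I : Set (Fin n), I ⊆ X ∧ M.Indep I ∧ I.ncard = k}.Nonempty :=
  ⟨0, ∅, empty_subset X, M.empty_indep, by simp⟩

lemma matRk_set_bdd (M : Matroid (Fin n)) (X : Set (Fin n)) :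
    BddAbove {k : ℕ | ∃ I : Set (Fin n), I ⊆ X ∧ M.Indep I ∧ I.ncard = k} := by
  refine ⟨n, fun k hk => ?_⟩
  obtain ⟨I, -, -, rfl⟩ := hk
  calc I.ncard ≤ (Set.univ : Set (Fin n)).ncard :=
        Set.ncard_le_ncard (subset_univ I) Set.finite_univ
    _ = n := by simp [Set.ncard_univ]

lemma matRk_mono (M : Matroid (Fin n)) {X Y : Set (Fin n)} (hXY : X ⊆ Y) :
    matRk M X ≤ matRk M Y := by
  refine csSup_le_csSup (matRk_set_bdd M Y) (matRk_set_nonempty M X) ?_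
  rintro k ⟨I, hIX, hI, rfl⟩
  exact ⟨I, hIX.trans hXY, hI, rfl⟩

lemma matRk_eq_ncard_basis (hE : M.E = Set.univ) {I X : Set (Fin n)} (hI : M.IsBasis I X) :
    matRk M X = I.ncard := by
  refine le_antisymm (csSup_le (matRk_set_nonempty M X) ?_)
    (le_csSup (matRk_set_bdd M X) ⟨I, hI.subset, hI.indep, rfl⟩)
  rintro k ⟨J, hJX, hJ, rfl⟩
  obtain ⟨J', hJ', hJJ'⟩ := hJ.subset_isBasis_of_subset hJX (by rw [hE]; exact subset_univ X)
  have h1 : J.ncard ≤ J'.ncard := Set.ncard_le_ncard hJJ' J'.toFinite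
  have h2 : J'.ncard = I.ncard := by
    rw [Set.ncard, Set.ncard, hJ'.encard_eq_encard hI]
  omega

lemma matRk_insert_eq (hE : M.E = Set.univ) {X : Set (Fin n)} {x : Fin n}
    (hx : x ∈ M.closure X) : matRk M (insert x X) = matRk M X := by
  obtain ⟨I, hI⟩ := M.exists_isBasis X (by rw [hE]; exact subset_univ X)
  have hI' : M.IsBasis I (insert x X) := by
    refine hI.indep.isBasis_of_subset_of_subset_closure
      (hI.subset.trans (subset_insert x X)) (insert_subset ?_ hI.subset_closure)
    rwa [hI.closure_eq_closure]
  rw [matRk_eq_ncard_basis hE hI, matRk_eq_ncard_basis hE hI']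

lemma matRk_insert_lt (hE : M.E = Set.univ) {X : Set (Fin n)} {x : Fin n}
    (hx : x ∉ M.closure X) : matRk M X < matRk M (insert x X) := by
  obtain ⟨I, hI⟩ := M.exists_isBasis X (by rw [hE]; exact subset_univ X)
  have hxI' : x ∉ M.closure I := by rwa [hI.closure_eq_closure]
  have hxI : x ∉ I := fun h => hxI' (M.subset_closure I (by rw [hE]; exact subset_univ I) h)
  have hind : M.Indep (insert x I) := by
    rw [hI.indep.insert_indep_iff_of_notMem hxI]
    exact ⟨by rw [hE]; trivial, hxI'⟩
  have hle : (insert x I).ncard ≤ matRk M (insert x X) :=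
    le_csSup (matRk_set_bdd M _) ⟨insert x I, insert_subset_insert hI.subset, hind, rfl⟩
  rw [Set.ncard_insert_of_notMem hxI I.toFinite] at hle
  rw [matRk_eq_ncard_basis hE hI]
  omega

lemma lam_true_iff (hE : M.E = Set.univ) (σ : Equiv.Perm (Fin n)) (i : Fin n) :
    lam M σ i = true ↔ σ i ∉ M.closure (⇑σ '' {j : Fin n | j < i}) := by
  have hset : {j : Fin n | j ≤ i} = insert i {j : Fin n | j < i} := by
    ext j; simp [le_iff_lt_or_eq, or_comm]
  have himg : ⇑σ '' {j : Fin n | j ≤ i} = insert (σ i) (⇑σ '' {j : Fin n | j < i}) := by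
    rw [hset, Set.image_insert_eq]
  unfold lam
  rw [himg]
  by_cases hx : σ i ∈ M.closure (⇑σ '' {j : Fin n | j < i})
  · simp [matRk_insert_eq hE hx, hx]
  · simp [matRk_insert_lt hE hx, hx]

lemma lam_false_iff (hE : M.E = Set.univ) (σ : Equiv.Perm (Fin n)) (i : Fin n) :
    lam M σ i = false ↔ σ i ∈ M.closure (⇑σ '' {j : Fin n | j < i}) := by
  rw [← Bool.not_eq_true, lam_true_iff hE, not_not]

lemma swap_image_eq (σ : Equiv.Perm (Fin n)) {p p' : Fin n} (S : Set (Fin n))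
    (hS : ∀ x, Equiv.swap p' p x ∈ S ↔ x ∈ S) :
    ⇑(σ * Equiv.swap p' p) '' S = ⇑σ '' S := by
  rw [Equiv.Perm.coe_mul, Set.image_comp]
  have h : ⇑(Equiv.swap p' p) '' S = S := by
    ext x
    rw [Set.mem_image_equiv, Equiv.symm_swap, hS]
  rw [h]

lemma lam_swap (hE : M.E = Set.univ) (σ : Equiv.Perm (Fin n)) {p p' : Fin n}
    (hpp : (p' : ℕ) + 1 = (p : ℕ))
    (h0 : lam M σ p' = false) (h1 : lam M σ p = true) :
    lam M (σ * Equiv.swap p' p) =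
      fun i => if i = p then false else if i = p' then true else lam M σ i := by
  have hne : p' ≠ p := by
    intro h; rw [h] at hpp; omega
  have hlt : p' < p := by rw [Fin.lt_def]; omega
  have h0' : σ p' ∈ M.closure (⇑σ '' {j : Fin n | j < p'}) := (lam_false_iff hE σ p').mp h0
  have h1' : σ p ∉ M.closure (⇑σ '' {j : Fin n | j < p}) := (lam_true_iff hE σ p).mp h1
  funext i
  rcases eq_or_ne i p with hip | hip
  · have goal : lam M (σ * Equiv.swap p' p) p = false := by
      rw [lam_false_iff hE]
      have hτp : (σ * Equiv.swap p' p) p = σ p' := by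
        simp [Equiv.swap_apply_right]
      have hpre : {j : Fin n | j < p} = insert p' {j : Fin n | j < p'} := by
        ext j
        simp only [Set.mem_setOf_eq, Set.mem_insert_iff, Fin.lt_def, Fin.ext_iff]
        omega
      have himg : ⇑(σ * Equiv.swap p' p) '' {j : Fin n | j < p}
          = insert (σ p) (⇑σ '' {j : Fin n | j < p'}) := by
        rw [hpre, Set.image_insert_eq]
        have h2 : (σ * Equiv.swap p' p) p' = σ p := by simp [Equiv.swap_apply_left]
        rw [h2]
        congr 1
        rw [swap_image_eq]
        intro x
        rcases eq_or_ne x p' with rfl | hx1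
        · simp only [Equiv.swap_apply_left, Set.mem_setOf_eq, Fin.lt_def]
          omega
        rcases eq_or_ne x p with rfl | hx2
        · simp only [Equiv.swap_apply_right, Set.mem_setOf_eq, Fin.lt_def]
          omega
        · rw [Equiv.swap_apply_of_ne_of_ne hx1 hx2]
      rw [hτp, himg]
      exact M.closure_subset_closure (Set.subset_insert _ _) h0'
    rw [hip, goal, if_pos rfl]
  rcases eq_or_ne i p' with hip' | hip'
  · have goal : lam M (σ * Equiv.swap p' p) p' = true := by
      rw [lam_true_iff hE]
      have hτ : (σ * Equiv.swap p' p) p' = σ p := by simp [Equiv.swap_apply_left]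
      have himg : ⇑(σ * Equiv.swap p' p) '' {j : Fin n | j < p'}
          = ⇑σ '' {j : Fin n | j < p'} := by
        rw [swap_image_eq]
        intro x
        rcases eq_or_ne x p' with rfl | hx1
        · simp only [Equiv.swap_apply_left, Set.mem_setOf_eq, Fin.lt_def]; omega
        rcases eq_or_ne x p with rfl | hx2
        · simp only [Equiv.swap_apply_right, Set.mem_setOf_eq, Fin.lt_def]; omega
        · rw [Equiv.swap_apply_of_ne_of_ne hx1 hx2]
      rw [hτ, himg]
      intro hmem
      exact h1' (M.closure_subset_closure
        (Set.image_mono (fun j (hj : j < p') => hj.trans hlt)) hmem)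
    rw [hip', goal, if_neg hne, if_pos rfl]
  · have hv1 : (i : ℕ) ≠ (p : ℕ) := fun h => hip (Fin.ext h)
    have hv2 : (i : ℕ) ≠ (p' : ℕ) := fun h => hip' (Fin.ext h)
    have himg1 : ⇑(σ * Equiv.swap p' p) '' {j : Fin n | j < i} = ⇑σ '' {j : Fin n | j < i} := by
      rw [swap_image_eq]
      intro x
      rcases eq_or_ne x p' with rfl | hx1
      · simp only [Equiv.swap_apply_left, Set.mem_setOf_eq, Fin.lt_def]; omega
      rcases eq_or_ne x p with rfl | hx2
      · simp only [Equiv.swap_apply_right, Set.mem_setOf_eq, Fin.lt_def]; omega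
      · rw [Equiv.swap_apply_of_ne_of_ne hx1 hx2]
    have himg2 : ⇑(σ * Equiv.swap p' p) '' {j : Fin n | j ≤ i} = ⇑σ '' {j : Fin n | j ≤ i} := by
      rw [swap_image_eq]
      intro x
      rcases eq_or_ne x p' with rfl | hx1
      · simp only [Equiv.swap_apply_left, Set.mem_setOf_eq, Fin.le_def]; omega
      rcases eq_or_ne x p with rfl | hx2
      · simp only [Equiv.swap_apply_right, Set.mem_setOf_eq, Fin.le_def]; omega
      · rw [Equiv.swap_apply_of_ne_of_ne hx1 hx2]
    rw [if_neg hip, if_neg hip']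
    unfold lam
    rw [himg1, himg2]

lemma mem_ones_iff {v : Fin n → Bool} {i : Fin n} : i ∈ ones v ↔ v i = true := by
  simp [ones]

lemma eq_of_ones_eq {v w : Fin n → Bool} (h : ones v = ones w) : v = w := by
  funext i
  have h2 := Finset.ext_iff.mp h i
  simp only [mem_ones_iff] at h2
  cases hv : v i <;> cases hw : w i <;> simp_all

lemma oe_congr {s : Finset (Fin n)} {a b : ℕ} (ha : s.card = a) (hb : s.card = b)
    {k : ℕ} (hk : k < a) (hk' : k < b) :
    s.orderEmbOfFin ha ⟨k, hk⟩ = s.orderEmbOfFin hb ⟨k, hk'⟩ := by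
  subst ha; subst hb; rfl

lemma ones_eq_of_pi_eq {v w : Fin n → Bool} (hc : (ones v).card = (ones w).card)
    (h : ∀ (k : ℕ) (hv : k < (ones v).card) (hw : k < (ones w).card),
      (ones v).orderEmbOfFin rfl ⟨k, hv⟩ = (ones w).orderEmbOfFin rfl ⟨k, hw⟩) :
    ones v = ones w := by
  apply Finset.coe_injective
  rw [← Finset.range_orderEmbOfFin (ones v) rfl, ← Finset.range_orderEmbOfFin (ones w) rfl]
  ext x
  simp only [Set.mem_range]
  constructor
  · rintro ⟨j, rfl⟩
    have hjw : (j : ℕ) < (ones w).card := by omega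
    exact ⟨⟨j, hjw⟩, (h j j.2 hjw).symm⟩
  · rintro ⟨j, rfl⟩
    have hjv : (j : ℕ) < (ones v).card := by omega
    exact ⟨⟨j, hjv⟩, h j hjv j.2⟩

lemma step (hE : M.E = Set.univ) {v w : Fin n → Bool} {σ : Equiv.Perm (Fin n)}
    (hσ : lam M σ = w) (hvw : wordLE v w) (hne : ones v ≠ ones w) :
    ∃ (w' : Fin n → Bool) (τ : Equiv.Perm (Fin n)), lam M τ = w' ∧ wordLE v w' ∧
      (∑ i ∈ ones w', (i : ℕ)) < ∑ i ∈ ones w, (i : ℕ) := by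
  classical
  obtain ⟨hm, hle⟩ := hvw
  have hex : ∃ k : ℕ, ∃ (hkv : k < (ones v).card) (hkw : k < (ones w).card),
      (ones v).orderEmbOfFin rfl ⟨k, hkv⟩ < (ones w).orderEmbOfFin rfl ⟨k, hkw⟩ := by
    by_contra hno
    refine hne (ones_eq_of_pi_eq hm fun k hv hw' => le_antisymm (hle k hv hw') (not_lt.mp ?_))
    exact fun hlt => hno ⟨k, hv, hw', hlt⟩
  set k := Nat.find hex with hkdef
  obtain ⟨hkv, hkw, hklt⟩ := Nat.find_spec hex
  have hmin : ∀ (j : ℕ) (hjv : j < (ones v).card) (hjw : j < (ones w).card), j < k →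
      (ones v).orderEmbOfFin rfl ⟨j, hjv⟩ = (ones w).orderEmbOfFin rfl ⟨j, hjw⟩ := by
    intro j hjv hjw hjk
    refine le_antisymm (hle j hjv hjw) (not_lt.mp fun hlt => ?_)
    exact Nat.find_min hex hjk ⟨hjv, hjw, hlt⟩
  set p : Fin n := (ones w).orderEmbOfFin rfl ⟨k, hkw⟩ with hpdef
  have hvklt : (((ones v).orderEmbOfFin rfl ⟨k, hkv⟩ : Fin n) : ℕ) < (p : ℕ) := hklt
  have hp1 : 1 ≤ (p : ℕ) := by omega
  have hpn : (p : ℕ) - 1 < n := lt_of_le_of_lt (Nat.sub_le _ _) p.2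
  set p' : Fin n := ⟨(p : ℕ) - 1, hpn⟩ with hp'def
  have hp'val : (p' : ℕ) + 1 = (p : ℕ) := by simp [hp'def]; omega
  have hne' : p' ≠ p := by
    intro h
    have : (p' : ℕ) = (p : ℕ) := by rw [h]
    omega
  have claimA : ∀ (j : ℕ) (hjw : j < (ones w).card), j < k →
      (((ones w).orderEmbOfFin rfl ⟨j, hjw⟩ : Fin n) : ℕ) < (p : ℕ) - 1 := by
    intro j hjw hjk
    have hjv : j < (ones v).card := by omega
    have heq := hmin j hjv hjw hjk
    have h1 : ((ones v).orderEmbOfFin rfl) ⟨j, hjv⟩ < ((ones v).orderEmbOfFin rfl) ⟨k, hkv⟩ :=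
      ((ones v).orderEmbOfFin rfl).strictMono (show (⟨j, hjv⟩ : Fin _) < ⟨k, hkv⟩ by
        rw [Fin.lt_def]; exact hjk)
    rw [heq] at h1
    rw [Fin.lt_def] at h1
    omega
  have hpw : p ∈ ones w := Finset.orderEmbOfFin_mem (ones w) rfl ⟨k, hkw⟩
  have hp'w : p' ∉ ones w := by
    intro hmem
    have hmem' : (p' : Fin n) ∈ (↑(ones w) : Set (Fin n)) := hmem
    rw [← Finset.range_orderEmbOfFin (ones w) rfl] at hmem'
    obtain ⟨j, hj⟩ := hmem'
    have hjval : (((ones w).orderEmbOfFin rfl j : Fin n) : ℕ) = (p : ℕ) - 1 := by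
      rw [hj]
    rcases lt_or_ge (j : ℕ) k with h | h
    · have := claimA j j.2 h
      have hfin : ((ones w).orderEmbOfFin rfl ⟨(j : ℕ), j.2⟩ : Fin n)
          = (ones w).orderEmbOfFin rfl j := by congr
      rw [hfin] at this
      omega
    · have hmono : ((ones w).orderEmbOfFin rfl) ⟨k, hkw⟩ ≤ ((ones w).orderEmbOfFin rfl) j :=
        ((ones w).orderEmbOfFin rfl).monotone (show (⟨k, hkw⟩ : Fin _) ≤ j by
          rw [Fin.le_def]; exact h)
      rw [Fin.le_def] at hmono
      omega
  have hwp : w p = true := mem_ones_iff.mp hpw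
  have hwp' : w p' = false := by
    have h2 : ¬ (w p' = true) := fun h => hp'w (mem_ones_iff.mpr h)
    rwa [Bool.not_eq_true] at h2
  set w' : Fin n → Bool := fun i => if i = p then false else if i = p' then true else w i
    with hw'def
  have hτ : lam M (σ * Equiv.swap p' p) = w' := by
    have h := lam_swap hE σ hp'val (by rw [hσ]; exact hwp') (by rw [hσ]; exact hwp)
    rw [hσ] at h
    exact h
  have hones' : ones w' = insert p' ((ones w).erase p) := by
    ext x
    simp only [mem_ones_iff, Finset.mem_insert, Finset.mem_erase, hw'def]
    rcases eq_or_ne x p with rfl | h1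
    · simp [hne'.symm]
    rcases eq_or_ne x p' with rfl | h2
    · simp [hne']
    · simp [h1, h2]
  have hnm : p' ∉ (ones w).erase p := fun h => hp'w (Finset.mem_of_mem_erase h)
  have hcardpos : 1 ≤ (ones w).card := Nat.succ_le_of_lt (Finset.card_pos.mpr ⟨p, hpw⟩)
  have hcard' : (ones w').card = (ones w).card := by
    rw [hones', Finset.card_insert_of_notMem hnm, Finset.card_erase_of_mem hpw]
    omega
  -- the order embedding of ones w'
  set f : Fin ((ones w).card) → Fin n :=
    fun j => if (j : ℕ) = k then p' else (ones w).orderEmbOfFin rfl j with hfdef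
  have hfmem : ∀ j, f j ∈ ones w' := by
    intro j
    rw [hones', hfdef]
    by_cases hjk : (j : ℕ) = k
    · simp [hjk]
    · simp only [if_neg hjk]
      refine Finset.mem_insert_of_mem (Finset.mem_erase.mpr ⟨?_, Finset.orderEmbOfFin_mem _ _ _⟩)
      intro hcontra
      have : j = (⟨k, hkw⟩ : Fin ((ones w).card)) :=
        ((ones w).orderEmbOfFin rfl).injective (by rw [hcontra, hpdef])
      exact hjk (by rw [this])
  have hfmono : StrictMono f := by
    intro a b hab
    have habv : (a : ℕ) < (b : ℕ) := hab
    rw [hfdef]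
    dsimp only
    rcases eq_or_ne (a : ℕ) k with hak | hak
    · have hbk : (b : ℕ) ≠ k := by omega
      rw [if_pos hak, if_neg hbk]
      have h1 : ((ones w).orderEmbOfFin rfl) ⟨k, hkw⟩ ≤ ((ones w).orderEmbOfFin rfl) b :=
        ((ones w).orderEmbOfFin rfl).monotone (show (⟨k, hkw⟩ : Fin _) ≤ b by
          rw [Fin.le_def]; dsimp; omega)
      rw [Fin.lt_def]
      rw [Fin.le_def] at h1
      have : ((ones w).orderEmbOfFin rfl ⟨k, hkw⟩ : Fin n) = p := rfl
      omega
    rcases eq_or_ne (b : ℕ) k with hbk | hbk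
    · rw [if_neg hak, if_pos hbk]
      have h1 := claimA a a.2 (by omega)
      have hfin : ((ones w).orderEmbOfFin rfl ⟨(a : ℕ), a.2⟩ : Fin n)
          = (ones w).orderEmbOfFin rfl a := by congr
      rw [hfin] at h1
      rw [Fin.lt_def]
      exact h1
    · rw [if_neg hak, if_neg hbk]
      exact ((ones w).orderEmbOfFin rfl).strictMono hab
  have huniq : f = ⇑((ones w').orderEmbOfFin hcard') :=
    Finset.orderEmbOfFin_unique hcard' hfmem hfmono
  refine ⟨w', σ * Equiv.swap p' p, hτ, ⟨hm.trans hcard'.symm, ?_⟩, ?_⟩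
  · intro j hjv hjw'
    have hjw : j < (ones w).card := by omega
    rw [oe_congr rfl hcard' hjw' hjw, ← huniq]
    rw [hfdef]
    dsimp only
    rcases eq_or_ne j k with hjk | hjk
    · rw [if_pos hjk]
      rw [show (⟨j, hjv⟩ : Fin ((ones v).card)) = ⟨k, hkv⟩ from Fin.ext hjk, Fin.le_def]
      omega
    · rw [if_neg hjk]
      exact hle j hjv hjw
  · rw [hones', Finset.sum_insert hnm]
    have h1 : (∑ x ∈ (ones w).erase p, (x : ℕ)) + (p : ℕ) = ∑ x ∈ ones w, (x : ℕ) :=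
      Finset.sum_erase_add _ _ hpw
    have h2 : (p' : ℕ) = (p : ℕ) - 1 := rfl
    omega

end Aux

/-- For any rank-`r` matroid `M` on the `n`-element linearly ordered set
`Fin n`, the image of `λ_M : S_n → W(n,r)` is an order ideal in `W(n,r)`: if `w` is in
the image and `v ≤ w`, then `v` is in the image. -/
theorem lam_image_order_ideal {n r : ℕ} (M : Matroid (Fin n)) (hE : M.E = Set.univ)
    (hr : ∃ B : Set (Fin n), M.IsBase B ∧ B.ncard = r)
    (v w : Fin n → Bool) (hw : ∃ σ : Equiv.Perm (Fin n), lam M σ = w)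
    (hvw : wordLE v w) :
    ∃ τ : Equiv.Perm (Fin n), lam M τ = v := by
  classical
  obtain ⟨σ, hσ⟩ := hw
  have H : ∀ (N : ℕ) (w : Fin n → Bool) (σ : Equiv.Perm (Fin n)), lam M σ = w →
      (∑ i ∈ ones w, (i : ℕ)) ≤ N → wordLE v w → ∃ τ : Equiv.Perm (Fin n), lam M τ = v := by
    intro N
    induction N with
    | zero =>
      intro w σ hσ hN hvw
      rcases eq_or_ne (ones v) (ones w) with he | hne2
      · exact ⟨σ, hσ.trans (eq_of_ones_eq he).symm⟩
      · obtain ⟨w', τ, hτ, hvw', hsum⟩ := step hE hσ hvw hne2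
        omega
    | succ N ih =>
      intro w σ hσ hN hvw
      rcases eq_or_ne (ones v) (ones w) with he | hne2
      · exact ⟨σ, hσ.trans (eq_of_ones_eq he).symm⟩
      · obtain ⟨w', τ, hτ, hvw', hsum⟩ := step hE hσ hvw hne2
        exact ih w' τ hτ (by omega) hvw'
  exact H _ w σ hσ le_rfl hvw
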